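/- Let (μ_k) be probability measures on a compact metric space converging weakly to μ, and let P_k, P be weak Feller Markov kernels with ‖P_k f - P f‖_∞ → 0 for all bounded continuous f. If μ_k P_k = μ_k for all k, then μP = μ. -/

import Mathlib

open MeasureTheory Filter

theorem stmt_12 {Z : Type*} [MeasurableSpace Z] [MetricSpace Z] [CompactSpace Z]
    [BorelSpace Z]
    (μseq : ℕ → Measure Z) (hprob : ∀ k, IsProbabilityMeasure (μseq k))
    (μ : Measure Z) [IsProbabilityMeasure μ]
    (hweak : ∀ f : BoundedContinuousFunction Z ℝ,
      Tendsto (fun k => ∫ z, f z ∂(μseq k)) atTop (nhds (∫ z, f z ∂μ)))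
    (Pk : ℕ → ProbabilityTheory.Kernel Z Z) (hPk : ∀ k, ProbabilityTheory.IsMarkovKernel (Pk k))
    (P : ProbabilityTheory.Kernel Z Z) [ProbabilityTheory.IsMarkovKernel P]
    (hFellerk : ∀ k, ∀ f : Z → ℝ, Continuous f → Continuous (fun z => ∫ y, f y ∂(Pk k z)))
    (hFeller : ∀ f : Z → ℝ, Continuous f → Continuous (fun z => ∫ y, f y ∂(P z)))
    (hunif : ∀ f : BoundedContinuousFunction Z ℝ,
      Tendsto (fun k => ⨆ z, |∫ y, f y ∂(Pk k z) - ∫ y, f y ∂(P z)|) atTop (nhds 0))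
    (hinvk : ∀ k, (μseq k).bind (Pk k) = μseq k) :
    μ.bind P = μ := by
  -- Z is nonempty since it carries a probability measure
  have hne : Nonempty Z := by
    by_contra h
    have h0 : (μ Set.univ) = 0 := by
      rw [Set.univ_eq_empty_iff.mpr (not_nonempty_iff.mp h)]; simp
    rw [measure_univ] at h0
    exact one_ne_zero h0
  haveI : IsProbabilityMeasure (μ.bind ⇑P) := by
    constructor
    rw [Measure.bind_apply MeasurableSet.univ P.measurable.aemeasurable]
    simp
  apply ext_of_forall_lintegral_eq_of_IsFiniteMeasure
  intro f
  -- real-valued version of f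
  set fr : BoundedContinuousFunction Z ℝ :=
    BoundedContinuousFunction.mkOfCompact
      ⟨fun z => (f z : ℝ), NNReal.continuous_coe.comp f.continuous⟩ with hfr
  have hfr_nn : ∀ z, 0 ≤ fr z := fun z => (f z).coe_nonneg
  -- g z = ∫ fr dP(z), as a bounded continuous function
  set g : BoundedContinuousFunction Z ℝ :=
    BoundedContinuousFunction.mkOfCompact
      ⟨fun z => ∫ y, fr y ∂(P z), hFeller _ fr.continuous⟩ with hg
  -- gk for each k
  have hgk_cont : ∀ k, Continuous (fun z => ∫ y, fr y ∂(Pk k z)) :=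
    fun k => hFellerk k _ fr.continuous
  set gk : ℕ → BoundedContinuousFunction Z ℝ := fun k =>
    BoundedContinuousFunction.mkOfCompact ⟨fun z => ∫ y, fr y ∂(Pk k z), hgk_cont k⟩ with hgk
  -- lintegral of f over ν.bind κ equals ofReal of double integral
  have key : ∀ (ν : Measure Z) (κ : ProbabilityTheory.Kernel Z Z),
      IsProbabilityMeasure ν → ProbabilityTheory.IsMarkovKernel κ →
      Continuous (fun z => ∫ y, fr y ∂(κ z)) →
      ∫⁻ x, (f x : ENNReal) ∂(ν.bind κ)
        = ENNReal.ofReal (∫ z, (∫ y, fr y ∂(κ z)) ∂ν) := by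
    intro ν κ hν hκ hc
    have hmeas : Measurable fun x => ((f x : NNReal) : ENNReal) :=
      measurable_coe_nnreal_ennreal.comp (f.continuous.measurable)
    rw [Measure.lintegral_bind κ.measurable.aemeasurable hmeas.aemeasurable]
    have h1 : ∀ z, ∫⁻ y, ((f y : NNReal) : ENNReal) ∂(κ z)
        = ENNReal.ofReal (∫ y, fr y ∂(κ z)) := by
      intro z
      haveI := hκ
      exact lintegral_coe_eq_integral (fun y => f y) (fr.integrable (κ z))
    simp_rw [h1]
    have hint : Integrable (fun z => ∫ y, fr y ∂(κ z)) ν := by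
      haveI := hν
      exact (BoundedContinuousFunction.mkOfCompact ⟨_, hc⟩).integrable ν
    rw [← ofReal_integral_eq_lintegral_ofReal hint
      (Filter.Eventually.of_forall fun z => integral_nonneg hfr_nn)]
  -- lintegral of f over a probability measure ν
  have key2 : ∀ (ν : Measure Z), IsProbabilityMeasure ν →
      ∫⁻ x, (f x : ENNReal) ∂ν = ENNReal.ofReal (∫ z, fr z ∂ν) := by
    intro ν hν
    haveI := hν
    exact lintegral_coe_eq_integral (fun y => f y) (fr.integrable ν)
  -- invariance in real form
  have hinv_real : ∀ k, ∫ z, gk k z ∂(μseq k) = ∫ z, fr z ∂(μseq k) := by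
    intro k
    haveI := hprob k
    have h := key (μseq k) (Pk k) (hprob k) (hPk k) (hgk_cont k)
    rw [hinvk k, key2 (μseq k) (hprob k)] at h
    have this := h.symm
    have h1 : 0 ≤ ∫ z, gk k z ∂(μseq k) :=
      integral_nonneg fun z => integral_nonneg hfr_nn
    have h2 : 0 ≤ ∫ z, fr z ∂(μseq k) := integral_nonneg hfr_nn
    exact (ENNReal.ofReal_eq_ofReal_iff h1 h2).mp this
  -- the limit argument : ∫ g dμ = ∫ fr dμ
  have hlim : ∫ z, g z ∂μ = ∫ z, fr z ∂μ := by
    -- ∫ gk dμk → ∫ g dμ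
    have hdiff : Tendsto (fun k => ∫ z, gk k z ∂(μseq k) - ∫ z, g z ∂(μseq k))
        atTop (nhds 0) := by
      apply squeeze_zero_norm _ (hunif fr)
      intro k
      haveI := hprob k
      have hbdd : BddAbove (Set.range fun z =>
          |∫ y, fr y ∂(Pk k z) - ∫ y, fr y ∂(P z)|) :=
        (isCompact_range ((hgk_cont k).sub (hFeller _ fr.continuous)).abs).bddAbove
      have hle : ∀ z, ‖gk k z - g z‖ ≤
          ⨆ z, |∫ y, fr y ∂(Pk k z) - ∫ y, fr y ∂(P z)| := by
        intro z
        exact le_ciSup hbdd z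
      rw [← integral_sub ((gk k).integrable _) (g.integrable _)]
      calc ‖∫ z, (gk k z - g z) ∂(μseq k)‖
          ≤ (⨆ z, |∫ y, fr y ∂(Pk k z) - ∫ y, fr y ∂(P z)|) * ((μseq k) Set.univ).toReal :=
            norm_integral_le_of_norm_le_const (Filter.Eventually.of_forall hle)
        _ = ⨆ z, |∫ y, fr y ∂(Pk k z) - ∫ y, fr y ∂(P z)| := by simp
    have h1 : Tendsto (fun k => ∫ z, gk k z ∂(μseq k)) atTop (nhds (∫ z, g z ∂μ)) := by
      have := hdiff.add (hweak g)
      simpa using this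
    have h2 : Tendsto (fun k => ∫ z, gk k z ∂(μseq k)) atTop (nhds (∫ z, fr z ∂μ)) := by
      have := hweak fr
      simpa only [hinv_real] using this
    exact tendsto_nhds_unique h1 h2
  rw [key μ P ‹_› ‹_› (hFeller _ fr.continuous), key2 μ ‹_›]
  exact congrArg ENNReal.ofReal hlim
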